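/- Moment formula for the c-corrected Bernoulli measure: ∫_{ℤ_p^×} x^{m-1} dE_c(x) = (1 - c^m)(1 - p^{m-1})·B_m/m for every integer m ≥ 1, where E_c is the measure with E_c(a + p^nℤ_p) = B_1({a/p^n}) - c·B_1({c̄a/p^n}) for c̄c ≡ 1 mod p^n. -/

import Mathlib

open Filter Finset


private lemma pow_add_sq (x w : ℤ) (k : ℕ) :
    ∃ z : ℤ, (x + w) ^ (k + 1) = x ^ (k + 1) + ((k : ℤ) + 1) * x ^ k * w + w ^ 2 * z := by
  induction k with
  | zero => exact ⟨0, by ring⟩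
  | succ k ih =>
    obtain ⟨z, hz⟩ := ih
    refine ⟨x * z + ((k : ℤ) + 1) * x ^ k + w * z, ?_⟩
    have h : (x + w) ^ (k + 1 + 1) = (x + w) * (x + w) ^ (k + 1) := by ring
    rw [h, hz]; push_cast; ring

private lemma norm_nat_le_one (p : ℕ) [Fact p.Prime] (M : ℕ) : ‖(M : ℚ_[p])‖ ≤ 1 := by
  have := Padic.norm_int_le_one (p := p) (M : ℤ)
  simpa using this

private lemma tau_spec (p : ℕ) [Fact p.Prime] (n : ℕ) (e : ℤ) (x : ℕ) :
    ∃ q : ℤ, ((((e : ZMod (p ^ n)) * (x : ZMod (p ^ n))).val : ℤ)) = e * x - (p ^ n : ℕ) * q := by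
  haveI : NeZero (p ^ n) := ⟨pow_ne_zero n (Fact.out : p.Prime).pos.ne'⟩
  have h : (((((e : ZMod (p ^ n)) * (x : ZMod (p ^ n))).val : ℤ) - e * x : ℤ) : ZMod (p ^ n)) = 0 := by
    push_cast [ZMod.natCast_val, ZMod.cast_id]
    ring
  rw [ZMod.intCast_zmod_eq_zero_iff_dvd] at h
  obtain ⟨q, hq⟩ := h
  exact ⟨-q, by push_cast at hq ⊢; linarith⟩

private lemma isUnit_c (p : ℕ) [Fact p.Prime] (n : ℕ) (c : ℤ) (hcp : ¬ (p : ℤ) ∣ c) :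
    IsUnit ((c : ZMod (p ^ n))) := by
  have hp : p.Prime := Fact.out
  have hco : IsCoprime ((p : ℤ) ^ n) c :=
    (((Nat.prime_iff_prime_int.mp hp).coprime_iff_not_dvd).mpr hcp).pow_left
  obtain ⟨u, v, huv⟩ := hco
  have h0 : ((p : ZMod (p ^ n))) ^ n = 0 := by
    have := ZMod.natCast_self (p ^ n)
    push_cast at this ⊢
    exact_mod_cast this
  have h1 : (v : ZMod (p ^ n)) * (c : ZMod (p ^ n)) = 1 := by
    have := congrArg (Int.cast : ℤ → ZMod (p ^ n)) huv
    push_cast at this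
    rwa [h0, mul_zero, zero_add] at this
  exact IsUnit.of_mul_eq_one _ (by rw [mul_comm]; exact h1)

private lemma not_dvd_inv_val (p : ℕ) [Fact p.Prime] (n : ℕ) (hn : 1 ≤ n) (c : ℤ)
    (hcp : ¬ (p : ℤ) ∣ c) : ¬ (p : ℤ) ∣ ((((c : ZMod (p ^ n))⁻¹).val : ℕ) : ℤ) := by
  have hp : p.Prime := Fact.out
  haveI : NeZero (p ^ n) := ⟨pow_ne_zero n hp.pos.ne'⟩
  have h1 : ((c : ZMod (p ^ n)))⁻¹ * (c : ZMod (p ^ n)) = 1 :=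
    ZMod.inv_mul_of_unit _ (isUnit_c p n c hcp)
  have h2 : (((((c : ZMod (p ^ n))⁻¹).val : ℤ) * c - 1 : ℤ) : ZMod (p ^ n)) = 0 := by
    push_cast [ZMod.natCast_val, ZMod.cast_id]
    rw [h1]; ring
  rw [ZMod.intCast_zmod_eq_zero_iff_dvd] at h2
  intro hdvd
  have hpN : (p : ℤ) ∣ ((p ^ n : ℕ) : ℤ) := by
    push_cast; exact dvd_pow_self _ (by omega)
  have : (p : ℤ) ∣ 1 := by
    have h3 : (p : ℤ) ∣ (((c : ZMod (p ^ n))⁻¹).val : ℤ) * c - 1 := hpN.trans h2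
    have h4 : (p : ℤ) ∣ (((c : ZMod (p ^ n))⁻¹).val : ℤ) * c := Dvd.dvd.mul_right hdvd c
    have h5 := dvd_sub h4 h3
    simpa using h5
  have := Int.le_of_dvd one_pos this
  have := hp.two_le
  omega

private lemma not_dvd_tau (p : ℕ) [Fact p.Prime] (n : ℕ) (hn : 1 ≤ n) (e : ℤ)
    (he : ¬ (p : ℤ) ∣ e) (x : ℕ) (hx : ¬ p ∣ x) :
    ¬ p ∣ (((e : ZMod (p ^ n)) * (x : ZMod (p ^ n))).val) := by
  have hp : p.Prime := Fact.out
  obtain ⟨q, hq⟩ := tau_spec p n e x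
  intro hdvd
  have h1 : (p : ℤ) ∣ ((((e : ZMod (p ^ n)) * (x : ZMod (p ^ n))).val : ℕ) : ℤ) :=
    Int.natCast_dvd_natCast.mpr hdvd
  have hpN : (p : ℤ) ∣ ((p ^ n : ℕ) : ℤ) := by push_cast; exact dvd_pow_self _ (by omega)
  have h2 : (p : ℤ) ∣ e * x := by
    have := dvd_add h1 (hpN.mul_right q)
    rwa [hq, sub_add_cancel] at this
  rcases ((Nat.prime_iff_prime_int.mp hp).dvd_mul).mp h2 with h | h
  · exact he h
  · exact hx (Int.natCast_dvd_natCast.mp h)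

private lemma sum_units_split (p : ℕ) [Fact p.Prime] (n : ℕ) (hn : 1 ≤ n) (f : ℕ → ℚ_[p]) :
    ∑ a ∈ (Finset.range (p ^ n)).filter (fun a => ¬ p ∣ a), f a
      = ∑ a ∈ Finset.range (p ^ n), f a - ∑ t ∈ Finset.range (p ^ (n - 1)), f (p * t) := by
  have hp : p.Prime := Fact.out
  have hpow : p ^ n = p ^ (n - 1) * p := by
    rw [← pow_succ]; congr 1; omega
  have h1 : ∑ a ∈ (Finset.range (p ^ n)).filter (fun a => p ∣ a), f a
      = ∑ t ∈ Finset.range (p ^ (n - 1)), f (p * t) := by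
    refine Finset.sum_nbij' (fun a => a / p) (fun t => p * t) ?_ ?_ ?_ ?_ ?_
    · intro a ha
      simp only [Finset.mem_filter, Finset.mem_range] at ha ⊢
      exact (Nat.div_lt_iff_lt_mul hp.pos).mpr (hpow ▸ ha.1)
    · intro t ht
      simp only [Finset.mem_filter, Finset.mem_range] at ht ⊢
      constructor
      · rw [hpow]; calc p * t < p * p ^ (n-1) := (Nat.mul_lt_mul_left hp.pos).mpr ht
          _ = p ^ (n-1) * p := mul_comm _ _
      · exact Dvd.intro t rfl
    · intro a ha
      simp only [Finset.mem_filter] at ha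
      exact Nat.mul_div_cancel' ha.2
    · intro t ht
      exact Nat.mul_div_cancel_left t hp.pos
    · intro a ha
      simp only [Finset.mem_filter] at ha
      rw [Nat.mul_div_cancel' ha.2]
  have h2 := Finset.sum_filter_add_sum_filter_not (Finset.range (p ^ n)) (fun a => p ∣ a) f
  rw [← h1]
  linear_combination h2

private lemma sum_unit_bij {M : Type*} [AddCommMonoid M] (p : ℕ) [Fact p.Prime] (n : ℕ) (hn : 1 ≤ n) (c : ℤ)
    (hcp : ¬ (p : ℤ) ∣ c) (F : ℕ → ℕ → M) :
    ∑ a ∈ (Finset.range (p ^ n)).filter (fun a => ¬ p ∣ a),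
        F a (((c : ZMod (p ^ n))⁻¹ * (a : ZMod (p ^ n))).val)
      = ∑ b ∈ (Finset.range (p ^ n)).filter (fun b => ¬ p ∣ b),
          F (((c : ZMod (p ^ n)) * (b : ZMod (p ^ n))).val) b := by
  have hp : p.Prime := Fact.out
  haveI : NeZero (p ^ n) := ⟨pow_ne_zero n hp.pos.ne'⟩
  have hu := isUnit_c p n c hcp
  have hcinv : ((c : ZMod (p ^ n))⁻¹)
      = ((((((c : ZMod (p ^ n))⁻¹).val : ℕ) : ℤ)) : ZMod (p ^ n)) := by
    rw [Int.cast_natCast, ZMod.natCast_val, ZMod.cast_id]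
  have hback : ∀ x : ZMod (p ^ n), (((x.val : ℕ)) : ZMod (p ^ n)) = x := fun x => by
    rw [ZMod.natCast_val, ZMod.cast_id]
  have hτσ : ∀ a : ℕ, a < p ^ n →
      (((c : ZMod (p ^ n)) *
        (((((c : ZMod (p ^ n))⁻¹ * (a : ZMod (p ^ n))).val : ℕ)) : ZMod (p ^ n))).val) = a := by
    intro a ha
    rw [hback, ← mul_assoc, ZMod.mul_inv_of_unit _ hu, one_mul, ZMod.val_natCast,
      Nat.mod_eq_of_lt ha]
  have hστ : ∀ b : ℕ, b < p ^ n →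
      (((c : ZMod (p ^ n))⁻¹ *
        (((((c : ZMod (p ^ n)) * (b : ZMod (p ^ n))).val : ℕ)) : ZMod (p ^ n))).val) = b := by
    intro b hb
    rw [hback, ← mul_assoc, ZMod.inv_mul_of_unit _ hu, one_mul, ZMod.val_natCast,
      Nat.mod_eq_of_lt hb]
  refine Finset.sum_nbij'
    (fun a => ((c : ZMod (p ^ n))⁻¹ * (a : ZMod (p ^ n))).val)
    (fun b => ((c : ZMod (p ^ n)) * (b : ZMod (p ^ n))).val) ?_ ?_ ?_ ?_ ?_
  · intro a ha
    simp only [Finset.mem_filter, Finset.mem_range] at ha ⊢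
    refine ⟨ZMod.val_lt _, ?_⟩
    rw [hcinv]
    exact not_dvd_tau p n hn _ (not_dvd_inv_val p n hn c hcp) a ha.2
  · intro b hb
    simp only [Finset.mem_filter, Finset.mem_range] at hb ⊢
    exact ⟨ZMod.val_lt _, not_dvd_tau p n hn c hcp b hb.2⟩
  · intro a ha
    simp only [Finset.mem_filter, Finset.mem_range] at ha
    exact hτσ a ha.1
  · intro b hb
    simp only [Finset.mem_filter, Finset.mem_range] at hb
    exact hστ b hb.1
  · intro a ha
    simp only [Finset.mem_filter, Finset.mem_range] at ha
    rw [hτσ a ha.1]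

private lemma sum_pow_decomp (p : ℕ) [Fact p.Prime] (j : ℕ) (hj : 1 ≤ j) (M : ℕ) :
    ∃ E : ℚ_[p], (∑ a ∈ Finset.range M, (a : ℚ_[p]) ^ j)
        = ((bernoulli j : ℚ) : ℚ_[p]) * M + (M : ℚ_[p]) ^ 2 * E ∧
      ‖E‖ ≤ (∑ i ∈ Finset.range (j + 1), ‖((bernoulli i : ℚ) : ℚ_[p])‖)
          * ‖(((j : ℚ_[p]) + 1))⁻¹‖ := by
  have hj1 : ((j : ℚ_[p]) + 1) ≠ 0 := by
    exact_mod_cast (Nat.cast_ne_zero (R := ℚ_[p])).mpr (Nat.succ_ne_zero j)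
  refine ⟨∑ i ∈ Finset.range j, ((bernoulli i : ℚ) : ℚ_[p]) * ((j + 1).choose i : ℚ_[p])
      * (M : ℚ_[p]) ^ (j - 1 - i) * ((j : ℚ_[p]) + 1)⁻¹, ?_, ?_⟩
  · have h0 := congrArg (Rat.cast : ℚ → ℚ_[p]) (_root_.sum_range_pow M j)
    push_cast at h0
    rw [h0, Finset.sum_range_succ]
    have hlast : ((bernoulli j : ℚ) : ℚ_[p]) * ((j + 1).choose j : ℚ_[p])
        * (M : ℚ_[p]) ^ (j + 1 - j) / ((j : ℚ_[p]) + 1) = ((bernoulli j : ℚ) : ℚ_[p]) * M := by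
      rw [Nat.choose_succ_self_right, Nat.succ_sub (le_refl j), Nat.sub_self]
      field_simp
      push_cast; ring
    rw [hlast]
    have hrest : ∀ i ∈ Finset.range j,
        ((bernoulli i : ℚ) : ℚ_[p]) * ((j + 1).choose i : ℚ_[p]) * (M : ℚ_[p]) ^ (j + 1 - i)
            / ((j : ℚ_[p]) + 1)
          = (M : ℚ_[p]) ^ 2 * (((bernoulli i : ℚ) : ℚ_[p]) * ((j + 1).choose i : ℚ_[p])
            * (M : ℚ_[p]) ^ (j - 1 - i) * ((j : ℚ_[p]) + 1)⁻¹) := by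
      intro i hi
      simp only [Finset.mem_range] at hi
      have h2 : j + 1 - i = 2 + (j - 1 - i) := by omega
      rw [h2, pow_add]
      field_simp
    rw [Finset.sum_congr rfl hrest, ← Finset.mul_sum]
    ring
  · calc ‖∑ i ∈ Finset.range j, ((bernoulli i : ℚ) : ℚ_[p]) * ((j + 1).choose i : ℚ_[p])
        * (M : ℚ_[p]) ^ (j - 1 - i) * ((j : ℚ_[p]) + 1)⁻¹‖
        ≤ ∑ i ∈ Finset.range j, ‖((bernoulli i : ℚ) : ℚ_[p]) * ((j + 1).choose i : ℚ_[p])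
          * (M : ℚ_[p]) ^ (j - 1 - i) * ((j : ℚ_[p]) + 1)⁻¹‖ := norm_sum_le _ _
      _ ≤ ∑ i ∈ Finset.range j, ‖((bernoulli i : ℚ) : ℚ_[p])‖ * ‖(((j : ℚ_[p]) + 1))⁻¹‖ := by
          refine Finset.sum_le_sum fun i _ => ?_
          rw [norm_mul, norm_mul, norm_mul]
          have h1 : ‖((j + 1).choose i : ℚ_[p])‖ ≤ 1 := norm_nat_le_one p _
          have h2 : ‖(M : ℚ_[p]) ^ (j - 1 - i)‖ ≤ 1 := by
            rw [norm_pow]; exact pow_le_one₀ (norm_nonneg _) (norm_nat_le_one p M)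
          calc ‖((bernoulli i : ℚ) : ℚ_[p])‖ * ‖((j + 1).choose i : ℚ_[p])‖
              * ‖(M : ℚ_[p]) ^ (j - 1 - i)‖ * ‖(((j : ℚ_[p]) + 1))⁻¹‖
              ≤ ‖((bernoulli i : ℚ) : ℚ_[p])‖ * 1 * 1 * ‖(((j : ℚ_[p]) + 1))⁻¹‖ := by
                gcongr <;> first | exact h1 | exact h2
            _ = ‖((bernoulli i : ℚ) : ℚ_[p])‖ * ‖(((j : ℚ_[p]) + 1))⁻¹‖ := by ring
      _ = (∑ i ∈ Finset.range j, ‖((bernoulli i : ℚ) : ℚ_[p])‖) * ‖(((j : ℚ_[p]) + 1))⁻¹‖ := by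
          rw [Finset.sum_mul]
      _ ≤ (∑ i ∈ Finset.range (j + 1), ‖((bernoulli i : ℚ) : ℚ_[p])‖)
          * ‖(((j : ℚ_[p]) + 1))⁻¹‖ := by
          refine mul_le_mul_of_nonneg_right ?_ (norm_nonneg _)
          exact Finset.sum_le_sum_of_subset_of_nonneg
            (Finset.range_subset_range.mpr (by omega)) (fun i _ _ => norm_nonneg _)

/-- Value of the `c`-corrected Bernoulli measure `E_c` on the coset `a + p^nℤ_p`
(for `0 ≤ a < p^n`): `E_c(a + p^nℤ_p) = B_1({a/p^n}) - c·B_1({c̄a/p^n})`, with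
`B_1(X) = X - 1/2` and `c̄` the inverse of `c` modulo `p^n`. -/
noncomputable def EcVal (p : ℕ) [Fact p.Prime] (c : ℤ) (n a : ℕ) : ℚ_[p] :=
  (((a % p ^ n : ℕ) : ℚ_[p]) / (p : ℚ_[p]) ^ n - 1 / 2) -
    (c : ℚ_[p]) * ((((((c : ZMod (p ^ n))⁻¹).val * a) % p ^ n : ℕ) : ℚ_[p]) / (p : ℚ_[p]) ^ n
      - 1 / 2)

private noncomputable def Cc (p : ℕ) [Fact p.Prime] (c : ℤ) (j : ℕ) : ℝ :=
  ‖(1 - (c : ℚ_[p]) ^ (j + 2)) / ((j : ℚ_[p]) + 2)‖ *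
      ((∑ i ∈ Finset.range (j + 2 + 1), ‖((bernoulli i : ℚ) : ℚ_[p])‖)
          * ‖((((j + 2 : ℕ) : ℚ_[p]) + 1))⁻¹‖
        + (∑ i ∈ Finset.range (j + 2 + 1), ‖((bernoulli i : ℚ) : ℚ_[p])‖)
          * ‖((((j + 2 : ℕ) : ℚ_[p]) + 1))⁻¹‖)
    + (‖((j : ℚ_[p]) + 1) / ((j : ℚ_[p]) + 2)‖ + ‖(c : ℚ_[p])‖)
    + ‖((c : ℚ_[p]) - 1) / 2‖ *
      (‖((bernoulli (j + 1) : ℚ) : ℚ_[p])‖ * 2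
        + ((∑ i ∈ Finset.range (j + 1 + 1), ‖((bernoulli i : ℚ) : ℚ_[p])‖)
            * ‖((((j + 1 : ℕ) : ℚ_[p]) + 1))⁻¹‖
          + (∑ i ∈ Finset.range (j + 1 + 1), ‖((bernoulli i : ℚ) : ℚ_[p])‖)
            * ‖((((j + 1 : ℕ) : ℚ_[p]) + 1))⁻¹‖))

set_option maxHeartbeats 1000000 in
private lemma key (p : ℕ) [Fact p.Prime] (c : ℤ) (hcp : ¬ (p : ℤ) ∣ c) (j n : ℕ)
    (hn : 1 ≤ n) :
    ∃ R : ℚ_[p],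
      (∑ a ∈ (Finset.range (p ^ n)).filter (fun a => ¬ p ∣ a),
          ((a : ℚ_[p]) ^ (j + 1)) * EcVal p c n a)
        - (1 - (c : ℚ_[p]) ^ (j + 2)) * (1 - (p : ℚ_[p]) ^ (j + 1)) *
          ((bernoulli (j + 2) : ℚ) : ℚ_[p]) / ((j + 2 : ℕ) : ℚ_[p])
      = (p : ℚ_[p]) ^ n * R ∧ ‖R‖ ≤ Cc p c j := by
  have hp : p.Prime := Fact.out
  haveI : NeZero (p ^ n) := ⟨pow_ne_zero n hp.pos.ne'⟩
  have hc0 : c ≠ 0 := by rintro rfl; exact hcp (dvd_zero _)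
  -- basic nonvanishing
  have hu0 : (p : ℚ_[p]) ≠ 0 := Nat.cast_ne_zero.mpr hp.pos.ne'
  have hP0 : (p : ℚ_[p]) ^ n ≠ 0 := pow_ne_zero _ hu0
  have h20 : (2 : ℚ_[p]) ≠ 0 := two_ne_zero
  have hD0 : ((j : ℚ_[p]) + 2) ≠ 0 := by
    have : ((j + 2 : ℕ) : ℚ_[p]) ≠ 0 := Nat.cast_ne_zero.mpr (by omega)
    push_cast at this; exact this
  have hcq0 : (c : ℚ_[p]) ≠ 0 := Int.cast_ne_zero.mpr hc0
  -- the quotients q b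
  choose q hq using fun x => tau_spec p n c x
  choose z hz using fun b : ℕ => pow_add_sq ((c : ℤ) * b) (-(((p ^ n : ℕ) : ℤ) * q b)) j
  choose w hw using fun b : ℕ => pow_add_sq ((c : ℤ) * b) (-(((p ^ n : ℕ) : ℤ) * q b)) (j + 1)
  have htau : ∀ b : ℕ, ((((c : ZMod (p ^ n)) * (b : ZMod (p ^ n))).val : ℤ))
      = (c : ℤ) * b + -(((p ^ n : ℕ) : ℤ) * q b) := fun b => by rw [hq b]; ring
  -- integer expansions
  have htz : ∀ b : ℕ, ((((c : ZMod (p ^ n)) * (b : ZMod (p ^ n))).val : ℤ)) ^ (j + 1)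
      = ((c : ℤ) * b) ^ (j + 1) - ((j : ℤ) + 1) * ((c : ℤ) * b) ^ j * (((p ^ n : ℕ) : ℤ) * q b)
        + (((p ^ n : ℕ) : ℤ) * q b) ^ 2 * z b := by
    intro b
    rw [htau b, hz b]; ring
  have htw : ∀ b : ℕ, ((((c : ZMod (p ^ n)) * (b : ZMod (p ^ n))).val : ℤ)) ^ (j + 2)
      = ((c : ℤ) * b) ^ (j + 2) - (((j : ℤ) + 1) + 1) * ((c : ℤ) * b) ^ (j + 1)
          * (((p ^ n : ℕ) : ℤ) * q b)
        + (((p ^ n : ℕ) : ℤ) * q b) ^ 2 * w b := by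
    intro b
    have h := hw b
    rw [htau b]
    calc ((c : ℤ) * b + -(((p ^ n : ℕ) : ℤ) * q b)) ^ (j + 2)
        = ((c : ℤ) * b + -(((p ^ n : ℕ) : ℤ) * q b)) ^ (j + 1 + 1) := by norm_num
      _ = _ := by rw [h]; push_cast; ring
  obtain ⟨n', rfl⟩ : ∃ n', n = n' + 1 := ⟨n - 1, by omega⟩
  -- integer-level expansions of the two key sums
  have hE2z : (∑ a ∈ (Finset.range (p ^ (n' + 1))).filter (fun a => ¬ p ∣ a), (a : ℤ) ^ (j + 2))
      = (c : ℤ) ^ (j + 2) *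
          (∑ a ∈ (Finset.range (p ^ (n' + 1))).filter (fun a => ¬ p ∣ a), (a : ℤ) ^ (j + 2))
        - ((j : ℤ) + 2) * (c : ℤ) ^ (j + 1) * ((p ^ (n' + 1) : ℕ) : ℤ) *
          (∑ b ∈ (Finset.range (p ^ (n' + 1))).filter (fun b => ¬ p ∣ b),
            (b : ℤ) ^ (j + 1) * q b)
        + (((p ^ (n' + 1) : ℕ) : ℤ)) ^ 2 *
          (∑ b ∈ (Finset.range (p ^ (n' + 1))).filter (fun b => ¬ p ∣ b),
            (q b) ^ 2 * w b) := by
    have hb := sum_unit_bij (M := ℤ) p (n' + 1) hn c hcp (fun a _ => (a : ℤ) ^ (j + 2))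
    calc (∑ a ∈ (Finset.range (p ^ (n' + 1))).filter (fun a => ¬ p ∣ a), (a : ℤ) ^ (j + 2))
        = ∑ b ∈ (Finset.range (p ^ (n' + 1))).filter (fun b => ¬ p ∣ b),
            ((((c : ZMod (p ^ (n' + 1))) * (b : ZMod (p ^ (n' + 1)))).val : ℤ)) ^ (j + 2) := hb
      _ = ∑ b ∈ (Finset.range (p ^ (n' + 1))).filter (fun b => ¬ p ∣ b),
            ((c : ℤ) ^ (j + 2) * (b : ℤ) ^ (j + 2)
              - (((j : ℤ) + 2) * (c : ℤ) ^ (j + 1) * ((p ^ (n' + 1) : ℕ) : ℤ)) *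
                ((b : ℤ) ^ (j + 1) * q b)
              + (((p ^ (n' + 1) : ℕ) : ℤ)) ^ 2 * ((q b) ^ 2 * w b)) :=
          Finset.sum_congr rfl (fun b _ => (htw b).trans (by ring))
      _ = _ := by
          rw [Finset.sum_add_distrib, Finset.sum_sub_distrib, ← Finset.mul_sum,
            ← Finset.mul_sum, ← Finset.mul_sum]
  have hE1z : (∑ b ∈ (Finset.range (p ^ (n' + 1))).filter (fun b => ¬ p ∣ b),
        ((((c : ZMod (p ^ (n' + 1))) * (b : ZMod (p ^ (n' + 1)))).val : ℤ)) ^ (j + 1) * b)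
      = (c : ℤ) ^ (j + 1) *
          (∑ a ∈ (Finset.range (p ^ (n' + 1))).filter (fun a => ¬ p ∣ a), (a : ℤ) ^ (j + 2))
        - ((j : ℤ) + 1) * (c : ℤ) ^ j * ((p ^ (n' + 1) : ℕ) : ℤ) *
          (∑ b ∈ (Finset.range (p ^ (n' + 1))).filter (fun b => ¬ p ∣ b),
            (b : ℤ) ^ (j + 1) * q b)
        + (((p ^ (n' + 1) : ℕ) : ℤ)) ^ 2 *
          (∑ b ∈ (Finset.range (p ^ (n' + 1))).filter (fun b => ¬ p ∣ b),
            (q b) ^ 2 * z b * b) := by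
    calc (∑ b ∈ (Finset.range (p ^ (n' + 1))).filter (fun b => ¬ p ∣ b),
          ((((c : ZMod (p ^ (n' + 1))) * (b : ZMod (p ^ (n' + 1)))).val : ℤ)) ^ (j + 1) * b)
        = ∑ b ∈ (Finset.range (p ^ (n' + 1))).filter (fun b => ¬ p ∣ b),
            ((c : ℤ) ^ (j + 1) * (b : ℤ) ^ (j + 2)
              - (((j : ℤ) + 1) * (c : ℤ) ^ j * ((p ^ (n' + 1) : ℕ) : ℤ)) *
                ((b : ℤ) ^ (j + 1) * q b)
              + (((p ^ (n' + 1) : ℕ) : ℤ)) ^ 2 * ((q b) ^ 2 * z b * b)) :=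
          Finset.sum_congr rfl (fun b _ => by rw [htz b]; ring)
      _ = _ := by
          rw [Finset.sum_add_distrib, Finset.sum_sub_distrib, ← Finset.mul_sum,
            ← Finset.mul_sum, ← Finset.mul_sum]
  -- cast the integer identities to Qp
  have hE2 := congrArg (fun t : ℤ => (t : ℚ_[p])) hE2z
  have hE1 := congrArg (fun t : ℤ => (t : ℚ_[p])) hE1z
  push_cast at hE2 hE1
  -- unfold EcVal and reindex
  have hEc : ∀ a ∈ (Finset.range (p ^ (n' + 1))).filter (fun a => ¬ p ∣ a),
      ((a : ℚ_[p]) ^ (j + 1)) * EcVal p c (n' + 1) a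
        = (fun a b => (a : ℚ_[p]) ^ (j + 1) *
            (((b : ℕ) : ℚ_[p]) / (p : ℚ_[p]) ^ (n' + 1) - 1 / 2)) a a -
          (c : ℚ_[p]) * ((fun a b => (a : ℚ_[p]) ^ (j + 1) *
            (((b : ℕ) : ℚ_[p]) / (p : ℚ_[p]) ^ (n' + 1) - 1 / 2)) a
              (((c : ZMod (p ^ (n' + 1)))⁻¹ * (a : ZMod (p ^ (n' + 1)))).val)) := by
    intro a ha
    simp only [Finset.mem_filter, Finset.mem_range] at ha
    have hval : (((c : ZMod (p ^ (n' + 1)))⁻¹).val * a) % p ^ (n' + 1)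
        = ((c : ZMod (p ^ (n' + 1)))⁻¹ * (a : ZMod (p ^ (n' + 1)))).val := by
      rw [ZMod.val_mul, ZMod.val_natCast, Nat.mod_eq_of_lt ha.1]
    simp only [EcVal, Nat.mod_eq_of_lt ha.1, hval]
    ring
  have hs1 : (∑ a ∈ (Finset.range (p ^ (n' + 1))).filter (fun a => ¬ p ∣ a),
        ((a : ℚ_[p]) ^ (j + 1)) * EcVal p c (n' + 1) a)
      = (∑ a ∈ (Finset.range (p ^ (n' + 1))).filter (fun a => ¬ p ∣ a),
          (a : ℚ_[p]) ^ (j + 1) * ((a : ℚ_[p]) / (p : ℚ_[p]) ^ (n' + 1) - 1 / 2))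
        - (c : ℚ_[p]) * (∑ b ∈ (Finset.range (p ^ (n' + 1))).filter (fun b => ¬ p ∣ b),
            ((((c : ZMod (p ^ (n' + 1))) * (b : ZMod (p ^ (n' + 1)))).val : ℕ) : ℚ_[p]) ^ (j + 1)
              * ((b : ℚ_[p]) / (p : ℚ_[p]) ^ (n' + 1) - 1 / 2)) := by
    rw [Finset.sum_congr rfl hEc, Finset.sum_sub_distrib, ← Finset.mul_sum,
      sum_unit_bij (M := ℚ_[p]) p (n' + 1) hn c hcp
        (fun a b => (a : ℚ_[p]) ^ (j + 1) *
          (((b : ℕ) : ℚ_[p]) / (p : ℚ_[p]) ^ (n' + 1) - 1 / 2))]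
  have hQtau : (∑ b ∈ (Finset.range (p ^ (n' + 1))).filter (fun b => ¬ p ∣ b),
        ((((c : ZMod (p ^ (n' + 1))) * (b : ZMod (p ^ (n' + 1)))).val : ℕ) : ℚ_[p]) ^ (j + 1))
      = ∑ a ∈ (Finset.range (p ^ (n' + 1))).filter (fun a => ¬ p ∣ a), (a : ℚ_[p]) ^ (j + 1) :=
    (sum_unit_bij (M := ℚ_[p]) p (n' + 1) hn c hcp
      (fun a _ => (a : ℚ_[p]) ^ (j + 1))).symm
  have hsplitA : (∑ a ∈ (Finset.range (p ^ (n' + 1))).filter (fun a => ¬ p ∣ a),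
        (a : ℚ_[p]) ^ (j + 1) * ((a : ℚ_[p]) / (p : ℚ_[p]) ^ (n' + 1) - 1 / 2))
      = (∑ a ∈ (Finset.range (p ^ (n' + 1))).filter (fun a => ¬ p ∣ a),
          (a : ℚ_[p]) ^ (j + 2)) / (p : ℚ_[p]) ^ (n' + 1)
        - (∑ a ∈ (Finset.range (p ^ (n' + 1))).filter (fun a => ¬ p ∣ a),
          (a : ℚ_[p]) ^ (j + 1)) / 2 := by
    rw [Finset.sum_div, Finset.sum_div, ← Finset.sum_sub_distrib]
    exact Finset.sum_congr rfl (fun a _ => by ring)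
  have hsplitB : (∑ b ∈ (Finset.range (p ^ (n' + 1))).filter (fun b => ¬ p ∣ b),
        ((((c : ZMod (p ^ (n' + 1))) * (b : ZMod (p ^ (n' + 1)))).val : ℕ) : ℚ_[p]) ^ (j + 1)
          * ((b : ℚ_[p]) / (p : ℚ_[p]) ^ (n' + 1) - 1 / 2))
      = (∑ b ∈ (Finset.range (p ^ (n' + 1))).filter (fun b => ¬ p ∣ b),
          ((((c : ZMod (p ^ (n' + 1))) * (b : ZMod (p ^ (n' + 1)))).val : ℕ) : ℚ_[p]) ^ (j + 1)
            * (b : ℚ_[p])) / (p : ℚ_[p]) ^ (n' + 1)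
        - (∑ a ∈ (Finset.range (p ^ (n' + 1))).filter (fun a => ¬ p ∣ a),
          (a : ℚ_[p]) ^ (j + 1)) / 2 := by
    rw [← hQtau, Finset.sum_div, Finset.sum_div, ← Finset.sum_sub_distrib]
    exact Finset.sum_congr rfl (fun b _ => by ring)
  -- Bernoulli decompositions
  obtain ⟨E1, hE1d, hE1b⟩ := sum_pow_decomp p (j + 2) (by omega) (p ^ (n' + 1))
  obtain ⟨E2, hE2d, hE2b⟩ := sum_pow_decomp p (j + 2) (by omega) (p ^ n')
  obtain ⟨E4, hE4d, hE4b⟩ := sum_pow_decomp p (j + 1) (by omega) (p ^ (n' + 1))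
  obtain ⟨E3, hE3d, hE3b⟩ := sum_pow_decomp p (j + 1) (by omega) (p ^ n')
  have hsplitP := sum_units_split p (n' + 1) hn (fun a => (a : ℚ_[p]) ^ (j + 2))
  have hsplitQ := sum_units_split p (n' + 1) hn (fun a => (a : ℚ_[p]) ^ (j + 1))
  simp only [Nat.add_sub_cancel] at hsplitP hsplitQ
  have hmulP : (∑ t ∈ Finset.range (p ^ n'), ((p * t : ℕ) : ℚ_[p]) ^ (j + 2))
      = (p : ℚ_[p]) ^ (j + 2) * ∑ t ∈ Finset.range (p ^ n'), (t : ℚ_[p]) ^ (j + 2) := by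
    rw [Finset.mul_sum]
    exact Finset.sum_congr rfl (fun t _ => by push_cast; ring)
  have hmulQ : (∑ t ∈ Finset.range (p ^ n'), ((p * t : ℕ) : ℚ_[p]) ^ (j + 1))
      = (p : ℚ_[p]) ^ (j + 1) * ∑ t ∈ Finset.range (p ^ n'), (t : ℚ_[p]) ^ (j + 1) := by
    rw [Finset.mul_sum]
    exact Finset.sum_congr rfl (fun t _ => by push_cast; ring)
  have hPd : (∑ a ∈ (Finset.range (p ^ (n' + 1))).filter (fun a => ¬ p ∣ a),
        (a : ℚ_[p]) ^ (j + 2))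
      = ((bernoulli (j + 2) : ℚ) : ℚ_[p]) * (p : ℚ_[p]) ^ (n' + 1) * (1 - (p : ℚ_[p]) ^ (j + 1))
        + ((p : ℚ_[p]) ^ (n' + 1)) ^ 2 * (E1 - (p : ℚ_[p]) ^ j * E2) := by
    rw [hsplitP, hmulP, hE1d, hE2d]
    push_cast
    ring
  have hQd : (∑ a ∈ (Finset.range (p ^ (n' + 1))).filter (fun a => ¬ p ∣ a),
        (a : ℚ_[p]) ^ (j + 1))
      = (p : ℚ_[p]) ^ (n' + 1) * (((bernoulli (j + 1) : ℚ) : ℚ_[p]) * (1 - (p : ℚ_[p]) ^ j)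
        + (p : ℚ_[p]) ^ (n' + 1) * E4 - (p : ℚ_[p]) ^ (n' + j) * E3) := by
    rw [hsplitQ, hmulQ, hE4d, hE3d]
    push_cast
    ring
  refine ⟨(1 - (c : ℚ_[p]) ^ (j + 2)) / ((j : ℚ_[p]) + 2) * (E1 - (p : ℚ_[p]) ^ j * E2)
      + (((j : ℚ_[p]) + 1) / ((j : ℚ_[p]) + 2) *
            (∑ b ∈ (Finset.range (p ^ (n' + 1))).filter (fun b => ¬ p ∣ b),
              ((q b : ℤ) : ℚ_[p]) ^ 2 * ((w b : ℤ) : ℚ_[p]))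
          - (c : ℚ_[p]) *
            (∑ b ∈ (Finset.range (p ^ (n' + 1))).filter (fun b => ¬ p ∣ b),
              ((q b : ℤ) : ℚ_[p]) ^ 2 * ((z b : ℤ) : ℚ_[p]) * (b : ℚ_[p])))
      + ((c : ℚ_[p]) - 1) / 2 * (((bernoulli (j + 1) : ℚ) : ℚ_[p]) * (1 - (p : ℚ_[p]) ^ j)
          + (p : ℚ_[p]) ^ (n' + 1) * E4 - (p : ℚ_[p]) ^ (n' + j) * E3), ?_, ?_⟩
  · push_cast
    rw [hs1, hsplitA, hsplitB, hE1]
    linear_combination (norm := (field_simp; ring1))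
      (((j : ℚ_[p]) + 1) / (((j : ℚ_[p]) + 2) * (p : ℚ_[p]) ^ (n' + 1))) * hE2
      + ((1 - (c : ℚ_[p]) ^ (j + 2)) / (((j : ℚ_[p]) + 2) * (p : ℚ_[p]) ^ (n' + 1))) * hPd
      + (((c : ℚ_[p]) - 1) / 2) * hQd
  · have hWle : ‖(∑ b ∈ (Finset.range (p ^ (n' + 1))).filter (fun b => ¬ p ∣ b),
        ((q b : ℤ) : ℚ_[p]) ^ 2 * ((w b : ℤ) : ℚ_[p]))‖ ≤ 1 := by
      have h : (∑ b ∈ (Finset.range (p ^ (n' + 1))).filter (fun b => ¬ p ∣ b),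
          ((q b : ℤ) : ℚ_[p]) ^ 2 * ((w b : ℤ) : ℚ_[p]))
          = (((∑ b ∈ (Finset.range (p ^ (n' + 1))).filter (fun b => ¬ p ∣ b),
            (q b) ^ 2 * w b : ℤ)) : ℚ_[p]) := by push_cast; rfl
      rw [h]; exact Padic.norm_int_le_one _
    have hZle : ‖(∑ b ∈ (Finset.range (p ^ (n' + 1))).filter (fun b => ¬ p ∣ b),
        ((q b : ℤ) : ℚ_[p]) ^ 2 * ((z b : ℤ) : ℚ_[p]) * (b : ℚ_[p]))‖ ≤ 1 := by
      have h : (∑ b ∈ (Finset.range (p ^ (n' + 1))).filter (fun b => ¬ p ∣ b),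
          ((q b : ℤ) : ℚ_[p]) ^ 2 * ((z b : ℤ) : ℚ_[p]) * (b : ℚ_[p]))
          = (((∑ b ∈ (Finset.range (p ^ (n' + 1))).filter (fun b => ¬ p ∣ b),
            (q b) ^ 2 * z b * b : ℤ)) : ℚ_[p]) := by push_cast; rfl
      rw [h]; exact Padic.norm_int_le_one _
    have hupow : ∀ e : ℕ, ‖(p : ℚ_[p]) ^ e‖ ≤ 1 := fun e => by
      rw [norm_pow]; exact pow_le_one₀ (norm_nonneg _) (norm_nat_le_one p p)
    have hGle : ‖E1 - (p : ℚ_[p]) ^ j * E2‖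
        ≤ (∑ i ∈ Finset.range (j + 2 + 1), ‖((bernoulli i : ℚ) : ℚ_[p])‖)
            * ‖((((j + 2 : ℕ) : ℚ_[p]) + 1))⁻¹‖
          + (∑ i ∈ Finset.range (j + 2 + 1), ‖((bernoulli i : ℚ) : ℚ_[p])‖)
            * ‖((((j + 2 : ℕ) : ℚ_[p]) + 1))⁻¹‖ := by
      refine (norm_sub_le _ _).trans (add_le_add hE1b ?_)
      rw [norm_mul]
      calc ‖(p : ℚ_[p]) ^ j‖ * ‖E2‖ ≤ 1 * ((∑ i ∈ Finset.range (j + 2 + 1),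
            ‖((bernoulli i : ℚ) : ℚ_[p])‖) * ‖((((j + 2 : ℕ) : ℚ_[p]) + 1))⁻¹‖) :=
          mul_le_mul (hupow j) hE2b (norm_nonneg _) zero_le_one
        _ = _ := one_mul _
    have hYle : ‖((bernoulli (j + 1) : ℚ) : ℚ_[p]) * (1 - (p : ℚ_[p]) ^ j)
          + (p : ℚ_[p]) ^ (n' + 1) * E4 - (p : ℚ_[p]) ^ (n' + j) * E3‖
        ≤ ‖((bernoulli (j + 1) : ℚ) : ℚ_[p])‖ * 2
          + ((∑ i ∈ Finset.range (j + 1 + 1), ‖((bernoulli i : ℚ) : ℚ_[p])‖)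
              * ‖((((j + 1 : ℕ) : ℚ_[p]) + 1))⁻¹‖
            + (∑ i ∈ Finset.range (j + 1 + 1), ‖((bernoulli i : ℚ) : ℚ_[p])‖)
              * ‖((((j + 1 : ℕ) : ℚ_[p]) + 1))⁻¹‖) := by
      have h1 : ‖((bernoulli (j + 1) : ℚ) : ℚ_[p]) * (1 - (p : ℚ_[p]) ^ j)‖
          ≤ ‖((bernoulli (j + 1) : ℚ) : ℚ_[p])‖ * 2 := by
        rw [norm_mul]
        refine mul_le_mul_of_nonneg_left ?_ (norm_nonneg _)
        refine (norm_sub_le _ _).trans ?_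
        rw [norm_one]
        linarith [hupow j]
      have h2 : ‖(p : ℚ_[p]) ^ (n' + 1) * E4‖
          ≤ (∑ i ∈ Finset.range (j + 1 + 1), ‖((bernoulli i : ℚ) : ℚ_[p])‖)
              * ‖((((j + 1 : ℕ) : ℚ_[p]) + 1))⁻¹‖ := by
        rw [norm_mul]
        calc ‖(p : ℚ_[p]) ^ (n' + 1)‖ * ‖E4‖ ≤ 1 * ((∑ i ∈ Finset.range (j + 1 + 1),
              ‖((bernoulli i : ℚ) : ℚ_[p])‖) * ‖((((j + 1 : ℕ) : ℚ_[p]) + 1))⁻¹‖) :=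
            mul_le_mul (hupow _) hE4b (norm_nonneg _) zero_le_one
          _ = _ := one_mul _
      have h3 : ‖(p : ℚ_[p]) ^ (n' + j) * E3‖
          ≤ (∑ i ∈ Finset.range (j + 1 + 1), ‖((bernoulli i : ℚ) : ℚ_[p])‖)
              * ‖((((j + 1 : ℕ) : ℚ_[p]) + 1))⁻¹‖ := by
        rw [norm_mul]
        calc ‖(p : ℚ_[p]) ^ (n' + j)‖ * ‖E3‖ ≤ 1 * ((∑ i ∈ Finset.range (j + 1 + 1),
              ‖((bernoulli i : ℚ) : ℚ_[p])‖) * ‖((((j + 1 : ℕ) : ℚ_[p]) + 1))⁻¹‖) :=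
            mul_le_mul (hupow _) hE3b (norm_nonneg _) zero_le_one
          _ = _ := one_mul _
      calc ‖((bernoulli (j + 1) : ℚ) : ℚ_[p]) * (1 - (p : ℚ_[p]) ^ j)
            + (p : ℚ_[p]) ^ (n' + 1) * E4 - (p : ℚ_[p]) ^ (n' + j) * E3‖
          ≤ ‖((bernoulli (j + 1) : ℚ) : ℚ_[p]) * (1 - (p : ℚ_[p]) ^ j)
            + (p : ℚ_[p]) ^ (n' + 1) * E4‖ + ‖(p : ℚ_[p]) ^ (n' + j) * E3‖ := norm_sub_le _ _
        _ ≤ (‖((bernoulli (j + 1) : ℚ) : ℚ_[p]) * (1 - (p : ℚ_[p]) ^ j)‖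
            + ‖(p : ℚ_[p]) ^ (n' + 1) * E4‖) + ‖(p : ℚ_[p]) ^ (n' + j) * E3‖ :=
            add_le_add_left (norm_add_le _ _) _
        _ ≤ _ := by linarith
    have hb1 : ‖(1 - (c : ℚ_[p]) ^ (j + 2)) / ((j : ℚ_[p]) + 2)
        * (E1 - (p : ℚ_[p]) ^ j * E2)‖
        ≤ ‖(1 - (c : ℚ_[p]) ^ (j + 2)) / ((j : ℚ_[p]) + 2)‖ *
          ((∑ i ∈ Finset.range (j + 2 + 1), ‖((bernoulli i : ℚ) : ℚ_[p])‖)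
              * ‖((((j + 2 : ℕ) : ℚ_[p]) + 1))⁻¹‖
            + (∑ i ∈ Finset.range (j + 2 + 1), ‖((bernoulli i : ℚ) : ℚ_[p])‖)
              * ‖((((j + 2 : ℕ) : ℚ_[p]) + 1))⁻¹‖) := by
      rw [norm_mul]
      exact mul_le_mul_of_nonneg_left hGle (norm_nonneg _)
    have hb2 : ‖((j : ℚ_[p]) + 1) / ((j : ℚ_[p]) + 2) *
          (∑ b ∈ (Finset.range (p ^ (n' + 1))).filter (fun b => ¬ p ∣ b),
            ((q b : ℤ) : ℚ_[p]) ^ 2 * ((w b : ℤ) : ℚ_[p]))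
        - (c : ℚ_[p]) *
          (∑ b ∈ (Finset.range (p ^ (n' + 1))).filter (fun b => ¬ p ∣ b),
            ((q b : ℤ) : ℚ_[p]) ^ 2 * ((z b : ℤ) : ℚ_[p]) * (b : ℚ_[p]))‖
        ≤ ‖((j : ℚ_[p]) + 1) / ((j : ℚ_[p]) + 2)‖ + ‖(c : ℚ_[p])‖ := by
      refine (norm_sub_le _ _).trans (add_le_add ?_ ?_)
      · rw [norm_mul]
        calc ‖((j : ℚ_[p]) + 1) / ((j : ℚ_[p]) + 2)‖ * ‖(∑ b ∈ (Finset.range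
              (p ^ (n' + 1))).filter (fun b => ¬ p ∣ b),
              ((q b : ℤ) : ℚ_[p]) ^ 2 * ((w b : ℤ) : ℚ_[p]))‖
            ≤ ‖((j : ℚ_[p]) + 1) / ((j : ℚ_[p]) + 2)‖ * 1 :=
              mul_le_mul_of_nonneg_left hWle (norm_nonneg _)
          _ = _ := mul_one _
      · rw [norm_mul]
        calc ‖(c : ℚ_[p])‖ * ‖(∑ b ∈ (Finset.range (p ^ (n' + 1))).filter
              (fun b => ¬ p ∣ b),
              ((q b : ℤ) : ℚ_[p]) ^ 2 * ((z b : ℤ) : ℚ_[p]) * (b : ℚ_[p]))‖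
            ≤ ‖(c : ℚ_[p])‖ * 1 := mul_le_mul_of_nonneg_left hZle (norm_nonneg _)
          _ = _ := mul_one _
    have hb3 : ‖((c : ℚ_[p]) - 1) / 2 * (((bernoulli (j + 1) : ℚ) : ℚ_[p])
          * (1 - (p : ℚ_[p]) ^ j)
        + (p : ℚ_[p]) ^ (n' + 1) * E4 - (p : ℚ_[p]) ^ (n' + j) * E3)‖
        ≤ ‖((c : ℚ_[p]) - 1) / 2‖ *
          (‖((bernoulli (j + 1) : ℚ) : ℚ_[p])‖ * 2
            + ((∑ i ∈ Finset.range (j + 1 + 1), ‖((bernoulli i : ℚ) : ℚ_[p])‖)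
                * ‖((((j + 1 : ℕ) : ℚ_[p]) + 1))⁻¹‖
              + (∑ i ∈ Finset.range (j + 1 + 1), ‖((bernoulli i : ℚ) : ℚ_[p])‖)
                * ‖((((j + 1 : ℕ) : ℚ_[p]) + 1))⁻¹‖)) := by
      rw [norm_mul]
      exact mul_le_mul_of_nonneg_left hYle (norm_nonneg _)
    refine ((norm_add_le _ _).trans (add_le_add_left (norm_add_le _ _) _)).trans ?_
    have := add_le_add (add_le_add hb1 hb2) hb3
    refine this.trans (le_of_eq ?_)
    rw [Cc]


/-- Moment formula for the `c`-corrected Bernoulli measure: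
`∫_{ℤ_p^×} x^{m-1} dE_c(x) = (1 - c^m)(1 - p^{m-1}) B_m/m`, the integral being the
limit of the Riemann sums `∑_{0 ≤ a < p^n, p∤a} a^{m-1} E_c(a + p^nℤ_p)`. -/
theorem stmt_15 (p : ℕ) [Fact p.Prime] (hodd : Odd p) (c : ℤ) (hc1 : c ≠ 1)
    (hcp : ¬ (p : ℤ) ∣ c) (m : ℕ) (hm : 1 ≤ m) :
    Tendsto (fun n => ∑ a ∈ (Finset.range (p ^ n)).filter (fun a => ¬ p ∣ a),
        ((a : ℚ_[p]) ^ (m - 1)) * EcVal p c n a) atTop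
      (nhds ((1 - (c : ℚ_[p]) ^ m) * (1 - (p : ℚ_[p]) ^ (m - 1)) *
        ((bernoulli m : ℚ) : ℚ_[p]) / (m : ℚ_[p]))) := by
  have hp : p.Prime := Fact.out
  obtain ⟨k, rfl⟩ : ∃ k, m = k + 1 := ⟨m - 1, by omega⟩
  simp only [Nat.add_sub_cancel]
  rcases Nat.eq_zero_or_pos k with rfl | hk1
  · -- the case `m = 1`; here both sides vanish
    have h0 : (1 - (c : ℚ_[p]) ^ (0 + 1)) * (1 - (p : ℚ_[p]) ^ 0) *
        ((bernoulli (0 + 1) : ℚ) : ℚ_[p]) / ((0 + 1 : ℕ) : ℚ_[p]) = 0 := by norm_num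
    rw [h0]
    have hzero : ∀ n : ℕ, 1 ≤ n →
        ∑ a ∈ (Finset.range (p ^ n)).filter (fun a => ¬ p ∣ a),
          ((a : ℚ_[p]) ^ 0) * EcVal p c n a = 0 := by
      intro n hn
      haveI : NeZero (p ^ n) := ⟨pow_ne_zero n hp.pos.ne'⟩
      have hEc : ∀ a ∈ (Finset.range (p ^ n)).filter (fun a => ¬ p ∣ a),
          ((a : ℚ_[p]) ^ 0) * EcVal p c n a
            = (((a : ℚ_[p]) / (p : ℚ_[p]) ^ n - 1 / 2) -
              (c : ℚ_[p]) * (((((c : ZMod (p ^ n))⁻¹ * (a : ZMod (p ^ n))).val : ℕ) : ℚ_[p])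
                / (p : ℚ_[p]) ^ n - 1 / 2)) := by
        intro a ha
        simp only [Finset.mem_filter, Finset.mem_range] at ha
        have hval : (((c : ZMod (p ^ n))⁻¹).val * a) % p ^ n
            = ((c : ZMod (p ^ n))⁻¹ * (a : ZMod (p ^ n))).val := by
          rw [ZMod.val_mul, ZMod.val_natCast, Nat.mod_eq_of_lt ha.1]
        rw [pow_zero, one_mul, EcVal, Nat.mod_eq_of_lt ha.1, hval]
      rw [Finset.sum_congr rfl hEc, Finset.sum_sub_distrib, ← Finset.mul_sum]
      rw [sum_unit_bij (M := ℚ_[p]) p n hn c hcp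
        (fun a b => ((b : ℚ_[p]) / (p : ℚ_[p]) ^ n - 1 / 2))]
      have hT : ∑ a ∈ (Finset.range (p ^ n)).filter (fun a => ¬ p ∣ a),
          ((a : ℚ_[p]) / (p : ℚ_[p]) ^ n - 1 / 2) = 0 := by
        obtain ⟨n', rfl⟩ : ∃ n', n = n' + 1 := ⟨n - 1, by omega⟩
        rw [sum_units_split p (n' + 1) hn]
        simp only [Nat.add_sub_cancel]
        have gauss : ∀ M : ℕ, 1 ≤ M →
            (∑ a ∈ Finset.range M, (a : ℚ_[p])) = ((M : ℚ_[p]) * ((M : ℚ_[p]) - 1)) / 2 := by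
          intro M hM
          have h := congrArg (Nat.cast : ℕ → ℚ_[p]) (Finset.sum_range_id_mul_two M)
          push_cast [Nat.cast_sub hM] at h
          linear_combination h / 2
        have hcast : ∀ t ∈ Finset.range (p ^ n'), ((p * t : ℕ) : ℚ_[p]) / (p : ℚ_[p]) ^ (n' + 1)
            - 1 / 2 = (p : ℚ_[p]) * (t : ℚ_[p]) / (p : ℚ_[p]) ^ (n' + 1) - 1 / 2 := by
          intro t _; push_cast; ring
        rw [Finset.sum_congr rfl hcast]
        have hp0 : (p : ℚ_[p]) ≠ 0 := Nat.cast_ne_zero.mpr hp.pos.ne'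
        have h2 : (2 : ℚ_[p]) ≠ 0 := two_ne_zero
        simp only [Finset.sum_sub_distrib, Finset.sum_const, Finset.card_range, nsmul_eq_mul,
          ← Finset.sum_div, ← Finset.mul_sum]
        rw [gauss _ (Nat.one_le_iff_ne_zero.mpr (pow_ne_zero _ hp.pos.ne')),
          gauss _ (Nat.one_le_iff_ne_zero.mpr (pow_ne_zero _ hp.pos.ne'))]
        push_cast
        field_simp
        ring
      rw [hT, mul_zero, sub_zero]
    have hev : (fun _ : ℕ => (0 : ℚ_[p])) =ᶠ[atTop] fun n =>
        ∑ a ∈ (Finset.range (p ^ n)).filter (fun a => ¬ p ∣ a),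
          ((a : ℚ_[p]) ^ 0) * EcVal p c n a := by
      filter_upwards [eventually_ge_atTop 1] with n hn
      exact (hzero n hn).symm
    exact tendsto_const_nhds.congr' hev
  · -- the case `m ≥ 2`
    obtain ⟨j, rfl⟩ : ∃ j, k = j + 1 := ⟨k - 1, by omega⟩
    have hmain : Tendsto (fun n => ∑ a ∈ (Finset.range (p ^ n)).filter (fun a => ¬ p ∣ a),
        ((a : ℚ_[p]) ^ (j + 1)) * EcVal p c n a) atTop
      (nhds ((1 - (c : ℚ_[p]) ^ (j + 2)) * (1 - (p : ℚ_[p]) ^ (j + 1)) *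
        ((bernoulli (j + 2) : ℚ) : ℚ_[p]) / ((j + 2 : ℕ) : ℚ_[p]))) := by
      rw [tendsto_iff_norm_sub_tendsto_zero]
      have hr0 : (0 : ℝ) ≤ (p : ℝ)⁻¹ := by positivity
      have hr1 : (p : ℝ)⁻¹ < 1 := by
        have h1 : (1 : ℝ) < p := by exact_mod_cast hp.one_lt
        exact inv_lt_one_of_one_lt₀ h1
      refine squeeze_zero' (g := fun n => ((p : ℝ)⁻¹) ^ n * Cc p c j)
        (Eventually.of_forall fun n => norm_nonneg _) ?_ ?_
      · rw [eventually_atTop]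
        refine ⟨1, fun n hn => ?_⟩
        obtain ⟨R, hR, hRb⟩ := key p c hcp j n hn
        rw [hR, norm_mul, norm_pow, Padic.norm_p]
        exact mul_le_mul_of_nonneg_left hRb (by positivity)
      · have := (tendsto_pow_atTop_nhds_zero_of_lt_one hr0 hr1).mul_const (Cc p c j)
        simpa using this
    exact hmain
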